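/- Under R₀ > 1, for any F₂ > F̄ := (νν_E k/δ_F)(1 - 1/R₀), the constant σ := δ_F - νβ_Eν_E/α(F₂) is strictly positive, and for all F ≥ F₂ and M_s ≥ 0 one has g(F, M_s) - δ_F F ≤ -σF. -/

import Mathlib

noncomputable def gfun (bE nE dE dM gs k nu : ℝ) (F Ms : ℝ) : ℝ :=
  if 0 < F then
    nu * (1 - nu) * bE ^ 2 * nE ^ 2 * F ^ 2 /
      ((bE * F / k + nE + dE) *
        ((1 - nu) * nE * bE * F + (bE * F / k + nE + dE) * dM * gs * Ms))
  else 0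

theorem stmt_11 (bE nE dE dM dF gs k nu F2 : ℝ)
    (hbE : 0 < bE) (hnE : 0 < nE) (hdE : 0 < dE) (hdM : 0 < dM)
    (hdF : 0 < dF) (hgs : 0 < gs) (hk : 0 < k) (hnu : nu ∈ Set.Ioo (0:ℝ) 1)
    (hR0 : 1 < nu * bE * nE / (dF * (nE + dE)))
    (hF2 : nu * nE * k / dF * (1 - 1 / (nu * bE * nE / (dF * (nE + dE)))) < F2) :
    0 < dF - nu * bE * nE / (bE * F2 / k + nE + dE) ∧
    ∀ F Ms : ℝ, F2 ≤ F → 0 ≤ Ms →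
      gfun bE nE dE dM gs k nu F Ms - dF * F ≤
        -((dF - nu * bE * nE / (bE * F2 / k + nE + dE)) * F) := by
  obtain ⟨hnu0, hnu1⟩ := hnu
  have hnEdE : (0:ℝ) < nE + dE := by linarith
  have hden : (0:ℝ) < dF * (nE + dE) := by positivity
  -- rewrite the barrier expression
  have hnbn : nu * bE * nE ≠ 0 := by positivity
  have hbar : nu * nE * k / dF * (1 - 1 / (nu * bE * nE / (dF * (nE + dE))))
      = nu * nE * k / dF - k * (nE + dE) / bE := by
    field_simp
  rw [hbar] at hF2
  -- F2 is positive
  have hF2pos : 0 < F2 := by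
    have h1 : dF * (nE + dE) < nu * bE * nE := (one_lt_div hden).mp hR0
    have h2 : 0 < nu * nE * k / dF - k * (nE + dE) / bE := by
      rw [sub_pos, div_lt_div_iff₀ hbE hdF]
      nlinarith
    linarith
  have hA2 : (0:ℝ) < bE * F2 / k + nE + dE := by positivity
  have hkey : nu * bE * nE < dF * (bE * F2 / k + nE + dE) := by
    have h3 : (nu * nE * k / dF - k * (nE + dE) / bE) * (dF * bE) < F2 * (dF * bE) :=
      mul_lt_mul_of_pos_right hF2 (by positivity)
    have h4 : (nu * nE * k / dF - k * (nE + dE) / bE) * (dF * bE)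
        = nu * nE * k * bE - dF * k * (nE + dE) := by
      field_simp
    rw [h4] at h3
    rw [← mul_lt_mul_iff_left₀ hk]
    have h5 : dF * (bE * F2 / k + nE + dE) * k = dF * (bE * F2 + nE * k + dE * k) := by
      field_simp
    rw [h5]
    nlinarith
  have hsig : 0 < dF - nu * bE * nE / (bE * F2 / k + nE + dE) := by
    rw [sub_pos, div_lt_iff₀ hA2]
    linarith
  refine ⟨hsig, ?_⟩
  intro F Ms hF hMs
  have hFpos : 0 < F := lt_of_lt_of_le hF2pos hF
  have hA : (0:ℝ) < bE * F / k + nE + dE := by positivity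
  have hAle : bE * F2 / k + nE + dE ≤ bE * F / k + nE + dE := by
    have : bE * F2 / k ≤ bE * F / k := by gcongr
    linarith
  have hT1 : (0:ℝ) < (1 - nu) * nE * bE * F := by
    have : (0:ℝ) < 1 - nu := by linarith
    positivity
  have hT2 : (0:ℝ) ≤ (bE * F / k + nE + dE) * dM * gs * Ms := by positivity
  have hD : (0:ℝ) < (bE * F / k + nE + dE) *
      ((1 - nu) * nE * bE * F + (bE * F / k + nE + dE) * dM * gs * Ms) := by
    apply mul_pos hA; linarith
  rw [gfun, if_pos hFpos]
  have hg : nu * (1 - nu) * bE ^ 2 * nE ^ 2 * F ^ 2 /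
      ((bE * F / k + nE + dE) *
        ((1 - nu) * nE * bE * F + (bE * F / k + nE + dE) * dM * gs * Ms))
      ≤ nu * bE * nE / (bE * F2 / k + nE + dE) * F := by
    rw [div_le_iff₀ hD]
    have h0 : nu * bE * nE / (bE * F2 / k + nE + dE) * F *
        ((bE * F / k + nE + dE) *
          ((1 - nu) * nE * bE * F + (bE * F / k + nE + dE) * dM * gs * Ms))
        = nu * bE * nE * F * (bE * F / k + nE + dE) *
          ((1 - nu) * nE * bE * F + (bE * F / k + nE + dE) * dM * gs * Ms)
          / (bE * F2 / k + nE + dE) := by ring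
    rw [h0, le_div_iff₀ hA2]
    nlinarith [mul_nonneg (show (0:ℝ) ≤ nu * (1 - nu) * bE ^ 2 * nE ^ 2 * F ^ 2 by
        have : (0:ℝ) < 1 - nu := by linarith
        positivity) (sub_nonneg.mpr hAle),
      mul_nonneg (mul_nonneg (show (0:ℝ) ≤ nu * bE * nE * F by positivity) hA.le) hT2]
  have : nu * bE * nE / (bE * F2 / k + nE + dE) * F - dF * F
      = -((dF - nu * bE * nE / (bE * F2 / k + nE + dE)) * F) := by ring
  linarith
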